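/- Let n ≥ 2, C ≥ 2 be integers and let P_1,…,P_n be pairwise distinct probability distributions on a set of C colors, with P_i = (p_{i,1},…,p_{i,C}); set ε = min_{i ≠ j} Σ_{c=1}^{C} |p_{i,c} − p_{j,c}| > 0. Let T = ⌈log₃ C⌉ + 1 and let η ∈ (0,1). Then there exist an integer m ≤ ⌈7·10^{12} · C²·T² · n³ · ε^{−2} · ln(n/η)⌉ and probability distributions σ_1,…,σ_C on {1,…,n} (a symmetric randomized strategy: a voter who observes color c votes for an urn drawn from σ_c) such that for every i ∈ {1,…,n}: if m voters independently each first draw a color c according to P_i and then vote for an urn drawn from σ_c, then with probability at least 1 − η urn i receives strictly more votes than every other urn. -/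

import Mathlib

open Finset


lemma signAbs_le' (y : ℝ) : |Real.sign y| ≤ 1 := by
  rcases Real.sign_apply_eq y with h | h | h <;> rw [h] <;> norm_num

noncomputable def bS (n : ℕ) (P : ℕ → ℕ → ℝ) (i c : ℕ) : ℝ :=
  ∑ u ∈ Finset.Icc 1 n, Real.sign (P i c - P u c)

noncomputable def bB (n C : ℕ) (P : ℕ → ℕ → ℝ) (i : ℕ) : ℝ :=
  ∑ u ∈ Finset.Icc 1 n, ∑ c ∈ Finset.Icc 1 C,
    (|P i c - P u c| - Real.sign (P i c - P u c) * P i c)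

noncomputable def bF (n C : ℕ) (P : ℕ → ℕ → ℝ) (i c : ℕ) : ℝ :=
  (bS n P i c + bB n C P i) / (8 * (n : ℝ) ^ 2)

noncomputable def bSig (n C : ℕ) (P : ℕ → ℕ → ℝ) (c j : ℕ) : ℝ :=
  1 / n + bF n C P j c - (∑ k ∈ Finset.Icc 1 n, bF n C P k c) / n

section facts

variable (n C : ℕ) (P : ℕ → ℕ → ℝ) (hn : 2 ≤ n)
variable (hPnn : ∀ i ∈ Finset.Icc 1 n, ∀ c ∈ Finset.Icc 1 C, 0 ≤ P i c)
variable (hPsum : ∀ i ∈ Finset.Icc 1 n, ∑ c ∈ Finset.Icc 1 C, P i c = 1)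

lemma card_Icc_real : ((Finset.Icc 1 n).card : ℝ) = n := by
  rw [Nat.card_Icc, Nat.add_sub_cancel]

include hn in
lemma nign_pos : (0:ℝ) < n := by
  have : (2:ℝ) ≤ n := by exact_mod_cast hn
  linarith

lemma bS_le (i c : ℕ) : |bS n P i c| ≤ n := by
  calc |bS n P i c| ≤ ∑ u ∈ Finset.Icc 1 n, |Real.sign (P i c - P u c)| :=
        Finset.abs_sum_le_sum_abs _ _
    _ ≤ ∑ _u ∈ Finset.Icc 1 n, (1:ℝ) := Finset.sum_le_sum fun u _ => signAbs_le' _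
    _ = n := by rw [Finset.sum_const, nsmul_eq_mul, mul_one, card_Icc_real]

include hPnn hPsum in
lemma bB_le (i : ℕ) (hi : i ∈ Finset.Icc 1 n) : |bB n C P i| ≤ 3 * n := by
  have hinner : ∀ u ∈ Finset.Icc 1 n,
      |∑ c ∈ Finset.Icc 1 C, (|P i c - P u c| - Real.sign (P i c - P u c) * P i c)| ≤ 3 := by
    intro u hu
    calc |∑ c ∈ Finset.Icc 1 C, (|P i c - P u c| - Real.sign (P i c - P u c) * P i c)|
        ≤ ∑ c ∈ Finset.Icc 1 C, |(|P i c - P u c| - Real.sign (P i c - P u c) * P i c)| :=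
          Finset.abs_sum_le_sum_abs _ _
      _ ≤ ∑ c ∈ Finset.Icc 1 C, (2 * P i c + P u c) := by
          refine Finset.sum_le_sum fun c hc => ?_
          have ha : 0 ≤ P i c := hPnn i hi c hc
          have hz : 0 ≤ P u c := hPnn u hu c hc
          have h1 : |P i c - P u c| ≤ P i c + P u c :=
            abs_le.mpr ⟨by linarith, by linarith⟩
          have h2 : |Real.sign (P i c - P u c) * P i c| ≤ P i c := by
            rw [abs_mul, abs_of_nonneg ha]
            calc |Real.sign (P i c - P u c)| * P i c ≤ 1 * P i c :=
                  mul_le_mul_of_nonneg_right (signAbs_le' _) ha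
              _ = P i c := one_mul _
          have h3 := abs_le.mp h2
          refine abs_le.mpr ⟨?_, ?_⟩ <;>
            · have := abs_nonneg (P i c - P u c); linarith
      _ = 3 := by
          rw [Finset.sum_add_distrib, ← Finset.mul_sum, hPsum i hi, hPsum u hu]
          norm_num
  calc |bB n C P i| ≤ ∑ u ∈ Finset.Icc 1 n,
        |∑ c ∈ Finset.Icc 1 C, (|P i c - P u c| - Real.sign (P i c - P u c) * P i c)| :=
        Finset.abs_sum_le_sum_abs _ _
    _ ≤ ∑ _u ∈ Finset.Icc 1 n, (3:ℝ) := Finset.sum_le_sum hinner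
    _ = 3 * n := by rw [Finset.sum_const, nsmul_eq_mul, card_Icc_real]; ring

include hn hPnn hPsum in
lemma bF_le (i : ℕ) (hi : i ∈ Finset.Icc 1 n) (c : ℕ) :
    |bF n C P i c| ≤ 1 / (2 * n) := by
  have hn0 : (0:ℝ) < n := nign_pos n hn
  have h8 : (0:ℝ) < 8 * (n:ℝ) ^ 2 := by positivity
  have h1 : |bS n P i c + bB n C P i| ≤ 4 * n := by
    have := bS_le n P i c
    have := bB_le n C P hPnn hPsum i hi
    calc |bS n P i c + bB n C P i| ≤ |bS n P i c| + |bB n C P i| := abs_add_le _ _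
      _ ≤ 4 * n := by linarith
  rw [bF, abs_div, abs_of_pos h8]
  rw [div_le_iff₀ h8]
  have : 1 / (2 * (n:ℝ)) * (8 * n ^ 2) = 4 * n := by field_simp; ring
  rw [this]
  exact h1

include hn hPnn hPsum in
lemma avg_le (c : ℕ) : |∑ k ∈ Finset.Icc 1 n, bF n C P k c| ≤ 1 / 2 := by
  calc |∑ k ∈ Finset.Icc 1 n, bF n C P k c| ≤ ∑ k ∈ Finset.Icc 1 n, |bF n C P k c| :=
        Finset.abs_sum_le_sum_abs _ _
    _ ≤ ∑ _k ∈ Finset.Icc 1 n, (1 / (2 * (n:ℝ))) :=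
        Finset.sum_le_sum fun k hk => bF_le n C P hn hPnn hPsum k hk c
    _ = 1 / 2 := by
        have hn0 : (0:ℝ) < n := nign_pos n hn
        rw [Finset.sum_const, nsmul_eq_mul, card_Icc_real]
        field_simp

include hn hPnn hPsum in
lemma sig_nonneg (c j : ℕ) (hj : j ∈ Finset.Icc 1 n) : 0 ≤ bSig n C P c j := by
  have hn0 : (0:ℝ) < n := nign_pos n hn
  have h1 := abs_le.mp (bF_le n C P hn hPnn hPsum j hj c)
  have h3 := abs_le.mp (avg_le n C P hn hPnn hPsum c)
  have h4 : (∑ k ∈ Finset.Icc 1 n, bF n C P k c) / n ≤ (1/2) / n :=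
    (div_le_div_iff_of_pos_right hn0).mpr h3.2
  have h5 : ((1:ℝ)/2) / n = 1 / (2 * n) := by ring
  have h6 : (1:ℝ) / n = 2 * (1 / (2 * n)) := by ring
  rw [bSig]
  linarith [h1.1, h4, h5 ▸ h4]

include hn hPnn hPsum in
lemma sig_le (c j : ℕ) (hj : j ∈ Finset.Icc 1 n) : bSig n C P c j ≤ 2 / n := by
  have hn0 : (0:ℝ) < n := nign_pos n hn
  have h1 := abs_le.mp (bF_le n C P hn hPnn hPsum j hj c)
  have h3 := abs_le.mp (avg_le n C P hn hPnn hPsum c)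
  have h4 : (-(1:ℝ)/2) / n ≤ (∑ k ∈ Finset.Icc 1 n, bF n C P k c) / n :=
    (div_le_div_iff_of_pos_right hn0).mpr (by linarith [h3.1])
  have h5 : (-(1:ℝ)/2) / n = -(1 / (2 * n)) := by ring
  have h6 : (2:ℝ) / n = 4 * (1 / (2 * n)) := by ring
  have h7 : (1:ℝ) / n = 2 * (1 / (2 * n)) := by ring
  rw [bSig]
  linarith [h1.2, h5 ▸ h4]

include hn in
lemma sig_sum (c : ℕ) : ∑ j ∈ Finset.Icc 1 n, bSig n C P c j = 1 := by
  have hn0 : (0:ℝ) < n := nign_pos n hn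
  simp only [bSig]
  rw [Finset.sum_sub_distrib, Finset.sum_add_distrib, Finset.sum_const, Finset.sum_const,
    nsmul_eq_mul, nsmul_eq_mul, card_Icc_real]
  field_simp
  ring

lemma comb_sums (s : Finset ℕ) (F1 F2 F3 F4 G : ℕ → ℝ)
    (h : ∀ u ∈ s, F1 u - F2 u + F3 u - F4 u = G u) :
    ((∑ u ∈ s, F1 u) - (∑ u ∈ s, F2 u) + (∑ u ∈ s, F3 u) - (∑ u ∈ s, F4 u))
      = ∑ u ∈ s, G u := by
  rw [← Finset.sum_sub_distrib, ← Finset.sum_add_distrib, ← Finset.sum_sub_distrib]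
  exact Finset.sum_congr rfl h

lemma sign_subgrad' (a b z : ℝ) :
    0 ≤ |a - z| - |b - z| - Real.sign (b - z) * (a - b) := by
  rcases lt_trichotomy (b - z) 0 with h | h | h
  · rw [Real.sign_of_neg h, abs_of_neg h]
    have := neg_abs_le (a - z)
    linarith
  · rw [h, Real.sign_zero]
    simpa using abs_nonneg (a - z)
  · rw [Real.sign_of_pos h, abs_of_pos h]
    have := le_abs_self (a - z)
    linarith

include hn hPnn hPsum in
lemma margin (ε : ℝ)
    (hε : ∀ i ∈ Finset.Icc 1 n, ∀ j ∈ Finset.Icc 1 n, i ≠ j →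
        ε ≤ ∑ c ∈ Finset.Icc 1 C, |P i c - P j c|)
    (i : ℕ) (hi : i ∈ Finset.Icc 1 n) (j : ℕ) (hj : j ∈ Finset.Icc 1 n) (hji : j ≠ i) :
    ε / (8 * (n:ℝ) ^ 2) ≤
      (∑ c ∈ Finset.Icc 1 C, P i c * bSig n C P c i)
        - ∑ c ∈ Finset.Icc 1 C, P i c * bSig n C P c j := by
  have hn0 : (0:ℝ) < n := nign_pos n hn
  have h8 : (0:ℝ) < 8 * (n:ℝ) ^ 2 := by positivity
  have N1 : (∑ c ∈ Finset.Icc 1 C, P i c * bSig n C P c i)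
        - ∑ c ∈ Finset.Icc 1 C, P i c * bSig n C P c j
      = (∑ c ∈ Finset.Icc 1 C,
          P i c * ((bS n P i c + bB n C P i) - (bS n P j c + bB n C P j))) / (8 * (n:ℝ) ^ 2) := by
    rw [← Finset.sum_sub_distrib, Finset.sum_div]
    refine Finset.sum_congr rfl fun c _ => ?_
    simp only [bSig, bF]
    ring
  have e1 : ∑ c ∈ Finset.Icc 1 C, P i c * bS n P i c
      = ∑ u ∈ Finset.Icc 1 n, ∑ c ∈ Finset.Icc 1 C, P i c * Real.sign (P i c - P u c) := by
    simp only [bS, Finset.mul_sum]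
    exact Finset.sum_comm
  have e2 : ∑ c ∈ Finset.Icc 1 C, P i c * bS n P j c
      = ∑ u ∈ Finset.Icc 1 n, ∑ c ∈ Finset.Icc 1 C, P i c * Real.sign (P j c - P u c) := by
    simp only [bS, Finset.mul_sum]
    exact Finset.sum_comm
  have hsplit : ∑ c ∈ Finset.Icc 1 C,
        P i c * ((bS n P i c + bB n C P i) - (bS n P j c + bB n C P j))
      = (∑ c ∈ Finset.Icc 1 C, P i c * bS n P i c)
        - (∑ c ∈ Finset.Icc 1 C, P i c * bS n P j c)
        + ((∑ c ∈ Finset.Icc 1 C, P i c) * bB n C P i)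
        - ((∑ c ∈ Finset.Icc 1 C, P i c) * bB n C P j) := by
    rw [Finset.sum_mul, Finset.sum_mul, ← Finset.sum_sub_distrib, ← Finset.sum_add_distrib,
      ← Finset.sum_sub_distrib]
    refine Finset.sum_congr rfl fun c _ => ?_
    ring
  have hBi : bB n C P i = ∑ u ∈ Finset.Icc 1 n, ∑ c ∈ Finset.Icc 1 C,
      (|P i c - P u c| - Real.sign (P i c - P u c) * P i c) := rfl
  have hBj : bB n C P j = ∑ u ∈ Finset.Icc 1 n, ∑ c ∈ Finset.Icc 1 C,
      (|P j c - P u c| - Real.sign (P j c - P u c) * P j c) := rfl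
  have N3 : ∑ c ∈ Finset.Icc 1 C,
        P i c * ((bS n P i c + bB n C P i) - (bS n P j c + bB n C P j))
      = ∑ u ∈ Finset.Icc 1 n, ∑ c ∈ Finset.Icc 1 C,
          (|P i c - P u c| - |P j c - P u c|
            - Real.sign (P j c - P u c) * (P i c - P j c)) := by
    rw [hsplit, hPsum i hi, one_mul, one_mul, e1, e2, hBi, hBj]
    refine comb_sums _ _ _ _ _ _ fun u _ => ?_
    rw [← Finset.sum_sub_distrib, ← Finset.sum_add_distrib, ← Finset.sum_sub_distrib]
    refine Finset.sum_congr rfl fun c _ => ?_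
    ring
  have hterm_nn : ∀ u ∈ Finset.Icc 1 n, (0:ℝ) ≤ ∑ c ∈ Finset.Icc 1 C,
      (|P i c - P u c| - |P j c - P u c| - Real.sign (P j c - P u c) * (P i c - P j c)) :=
    fun u _ => Finset.sum_nonneg fun c _ => sign_subgrad' _ _ _
  have hatj : ∑ c ∈ Finset.Icc 1 C,
      (|P i c - P j c| - |P j c - P j c| - Real.sign (P j c - P j c) * (P i c - P j c))
      = ∑ c ∈ Finset.Icc 1 C, |P i c - P j c| := by
    refine Finset.sum_congr rfl fun c _ => ?_
    rw [sub_self, abs_zero, Real.sign_zero]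
    ring
  have N4 : ε ≤ ∑ c ∈ Finset.Icc 1 C,
        P i c * ((bS n P i c + bB n C P i) - (bS n P j c + bB n C P j)) := by
    rw [N3]
    have h1 := Finset.single_le_sum hterm_nn hj
    rw [hatj] at h1
    exact le_trans (hε i hi j hj (Ne.symm hji)) h1
  rw [N1]
  exact (div_le_div_iff_of_pos_right h8).mpr N4

end facts



lemma chernoff (n m i j : ℕ) (hi : i ∈ Finset.Icc 1 n) (hj : j ∈ Finset.Icc 1 n)
    (hij : j ≠ i) (Q : ℕ → ℝ)
    (hQnn : ∀ u ∈ Finset.Icc 1 n, 0 ≤ Q u)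
    (hQle : ∀ u ∈ Finset.Icc 1 n, Q u ≤ 2 / n)
    (hQsum : ∑ u ∈ Finset.Icc 1 n, Q u = 1)
    (γ : ℝ) (hγ : 0 < γ) (hmargin : γ ≤ Q i - Q j) :
    ∑ v ∈ Fintype.piFinset (fun _ : Fin m => Finset.Icc 1 n),
      (if (Finset.univ.filter (fun t : Fin m => v t = i)).card ≤
          (Finset.univ.filter (fun t : Fin m => v t = j)).card
       then ∏ t : Fin m, Q (v t) else 0)
      ≤ Real.exp (-(m * (γ ^ 2 * n / 8))) := by
  classical
  have hn0 : (0:ℝ) < n := by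
    have h1 : 1 ≤ n := le_trans (Finset.mem_Icc.mp hi).1 (Finset.mem_Icc.mp hi).2
    exact_mod_cast Nat.lt_of_lt_of_le Nat.zero_lt_one h1
  set t₀ : ℝ := γ * n / 4 with ht₀def
  have ht0pos : 0 < t₀ := by positivity
  set x : ℝ := 1 + t₀ with hxdef
  have hxpos : 0 < x := by positivity
  have hx1 : 1 ≤ x := by simp [hxdef]; positivity
  set ρ : ℕ → ℝ := fun u => if u = j then x else if u = i then x⁻¹ else 1 with hρdef
  have hρnn : ∀ u, 0 ≤ ρ u := by
    intro u; simp only [hρdef]; split_ifs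
    · exact hxpos.le
    · positivity
    · norm_num
  -- pointwise bound
  have step1 : ∀ v ∈ Fintype.piFinset (fun _ : Fin m => Finset.Icc 1 n),
      (if (Finset.univ.filter (fun t : Fin m => v t = i)).card ≤
          (Finset.univ.filter (fun t : Fin m => v t = j)).card
       then ∏ t : Fin m, Q (v t) else 0) ≤ ∏ t : Fin m, (ρ (v t) * Q (v t)) := by
    intro v hv
    have hvmem : ∀ t, v t ∈ Finset.Icc 1 n := by
      intro t; exact (Fintype.mem_piFinset.mp hv) t
    have hμnn : 0 ≤ ∏ t : Fin m, Q (v t) :=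
      Finset.prod_nonneg fun t _ => hQnn _ (hvmem t)
    have hprodnn : 0 ≤ ∏ t : Fin m, (ρ (v t) * Q (v t)) :=
      Finset.prod_nonneg fun t _ => mul_nonneg (hρnn _) (hQnn _ (hvmem t))
    split_ifs with hc
    · have hρprod : ∏ t : Fin m, ρ (v t) =
          x ^ (Finset.univ.filter (fun t : Fin m => v t = j)).card *
          x⁻¹ ^ (Finset.univ.filter (fun t : Fin m => v t = i)).card := by
        have hpt : ∀ t : Fin m, ρ (v t) =
            x ^ (if v t = j then 1 else 0 : ℕ) * x⁻¹ ^ (if v t = i then 1 else 0 : ℕ) := by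
          intro t
          by_cases h1 : v t = j
          · have h2 : ¬ (v t = i) := by rw [h1]; exact hij
            simp [hρdef, h1, h2, hij]
          · by_cases h2 : v t = i <;> simp [hρdef, h1, h2, Ne.symm hij]
        rw [Finset.prod_congr rfl (fun t _ => hpt t), Finset.prod_mul_distrib,
          Finset.prod_pow_eq_pow_sum, Finset.prod_pow_eq_pow_sum,
          ← Finset.card_filter, ← Finset.card_filter]
      have h1 : 1 ≤ ∏ t : Fin m, ρ (v t) := by
        rw [hρprod, inv_pow, ← div_eq_mul_inv]
        rw [le_div_iff₀ (pow_pos hxpos _), one_mul]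
        exact pow_le_pow_right₀ hx1 hc
      calc ∏ t : Fin m, Q (v t) ≤ (∏ t : Fin m, ρ (v t)) * ∏ t : Fin m, Q (v t) :=
            le_mul_of_one_le_left hμnn h1
        _ = ∏ t : Fin m, (ρ (v t) * Q (v t)) := (Finset.prod_mul_distrib).symm
    · exact hprodnn
  have step2 : ∑ v ∈ Fintype.piFinset (fun _ : Fin m => Finset.Icc 1 n),
      ∏ t : Fin m, (ρ (v t) * Q (v t)) = (∑ u ∈ Finset.Icc 1 n, ρ u * Q u) ^ m := by
    have hps := Finset.prod_univ_sum (fun _ : Fin m => Finset.Icc 1 n)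
      (fun _ u => ρ u * Q u)
    rw [← hps, Finset.prod_const, Finset.card_univ, Fintype.card_fin]
  have hg : ∑ u ∈ Finset.Icc 1 n, ρ u * Q u
      = 1 + (x - 1) * Q j + (x⁻¹ - 1) * Q i := by
    have hpt : ∀ u ∈ Finset.Icc 1 n, ρ u * Q u =
        Q u + ((if u = j then (x - 1) * Q j else 0) + (if u = i then (x⁻¹ - 1) * Q i else 0)) := by
      intro u _
      by_cases h1 : u = j
      · have h2 : ¬ (u = i) := by rw [h1]; exact hij
        simp only [hρdef, h1, eq_self_iff_true, if_true, if_neg hij]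
        ring
      · by_cases h2 : u = i
        · simp only [hρdef, h2, eq_self_iff_true, if_true, if_neg (Ne.symm hij)]
          ring
        · simp only [hρdef, if_neg h1, if_neg h2]
          ring
    rw [Finset.sum_congr rfl hpt, Finset.sum_add_distrib, Finset.sum_add_distrib, hQsum,
      Finset.sum_ite_eq' _ j, Finset.sum_ite_eq' _ i, if_pos hj, if_pos hi]
    ring
  have hQinn : 0 ≤ Q i := hQnn i hi
  have hQjnn : 0 ≤ Q j := hQnn j hj
  have hQile : Q i ≤ 2 / n := hQle i hi
  have hxinv : x⁻¹ - 1 ≤ -t₀ + t₀ ^ 2 := by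
    have hxx : x * x⁻¹ = 1 := mul_inv_cancel₀ hxpos.ne'
    nlinarith [mul_pos ht0pos (mul_pos ht0pos ht0pos), inv_nonneg.mpr hxpos.le]
  have hgle : ∑ u ∈ Finset.Icc 1 n, ρ u * Q u ≤ Real.exp (-(γ ^ 2 * n / 8)) := by
    rw [hg]
    have h1 : (x⁻¹ - 1) * Q i ≤ (-t₀ + t₀ ^ 2) * Q i :=
      mul_le_mul_of_nonneg_right hxinv hQinn
    have h2 : 1 + (x - 1) * Q j + (x⁻¹ - 1) * Q i
        ≤ 1 + (-(t₀ * γ) + t₀ ^ 2 * (2 / n)) := by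
      have hx1' : x - 1 = t₀ := by rw [hxdef]; ring
      have h3 : t₀ ^ 2 * Q i ≤ t₀ ^ 2 * (2 / n) :=
        mul_le_mul_of_nonneg_left hQile (sq_nonneg t₀)
      have h4 : t₀ * Q j - t₀ * Q i ≤ -(t₀ * γ) := by nlinarith
      nlinarith [h1, h3]
    have h5 : -(t₀ * γ) + t₀ ^ 2 * (2 / n) = -(γ ^ 2 * n / 8) := by
      rw [ht₀def]; field_simp; ring
    calc 1 + (x - 1) * Q j + (x⁻¹ - 1) * Q i
        ≤ 1 + (-(t₀ * γ) + t₀ ^ 2 * (2 / n)) := h2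
      _ = (-(γ ^ 2 * n / 8)) + 1 := by rw [h5]; ring
      _ ≤ Real.exp (-(γ ^ 2 * n / 8)) := Real.add_one_le_exp _
  have hgnn : 0 ≤ ∑ u ∈ Finset.Icc 1 n, ρ u * Q u :=
    Finset.sum_nonneg fun u hu => mul_nonneg (hρnn u) (hQnn u hu)
  calc ∑ v ∈ Fintype.piFinset (fun _ : Fin m => Finset.Icc 1 n),
      (if (Finset.univ.filter (fun t : Fin m => v t = i)).card ≤
          (Finset.univ.filter (fun t : Fin m => v t = j)).card
       then ∏ t : Fin m, Q (v t) else 0)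
      ≤ ∑ v ∈ Fintype.piFinset (fun _ : Fin m => Finset.Icc 1 n),
          ∏ t : Fin m, (ρ (v t) * Q (v t)) := Finset.sum_le_sum step1
    _ = (∑ u ∈ Finset.Icc 1 n, ρ u * Q u) ^ m := step2
    _ ≤ (Real.exp (-(γ ^ 2 * n / 8))) ^ m := pow_le_pow_left₀ hgnn hgle m
    _ = Real.exp (-(m * (γ ^ 2 * n / 8))) := by
        rw [← Real.exp_nat_mul]; ring_nf



open Classical in
lemma election (n m i : ℕ) (hi : i ∈ Finset.Icc 1 n) (Q : ℕ → ℝ)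
    (hQnn : ∀ u ∈ Finset.Icc 1 n, 0 ≤ Q u)
    (hQle : ∀ u ∈ Finset.Icc 1 n, Q u ≤ 2 / n)
    (hQsum : ∑ u ∈ Finset.Icc 1 n, Q u = 1)
    (γ : ℝ) (hγ : 0 < γ)
    (hmargin : ∀ j ∈ Finset.Icc 1 n, j ≠ i → γ ≤ Q i - Q j)
    (η : ℝ)
    (hbound : (n : ℝ) * Real.exp (-(m * (γ ^ 2 * n / 8))) ≤ η) :
    1 - η ≤ ∑ v ∈ Fintype.piFinset (fun _ : Fin m => Finset.Icc 1 n),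
      (if ∀ j ∈ Finset.Icc 1 n, j ≠ i →
            (Finset.univ.filter (fun t : Fin m => v t = j)).card <
            (Finset.univ.filter (fun t : Fin m => v t = i)).card
       then ∏ t : Fin m, Q (v t) else 0) := by
  set A := Fintype.piFinset (fun _ : Fin m => Finset.Icc 1 n) with hA
  set W : (Fin m → ℕ) → Prop := fun v => ∀ j ∈ Finset.Icc 1 n, j ≠ i →
      (Finset.univ.filter (fun t : Fin m => v t = j)).card <
      (Finset.univ.filter (fun t : Fin m => v t = i)).card with hW
  have hμnn : ∀ v ∈ A, 0 ≤ ∏ t : Fin m, Q (v t) := by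
    intro v hv
    exact Finset.prod_nonneg fun t _ => hQnn _ ((Fintype.mem_piFinset.mp hv) t)
  have hμsum : ∑ v ∈ A, ∏ t : Fin m, Q (v t) = 1 := by
    have hps := Finset.prod_univ_sum (fun _ : Fin m => Finset.Icc 1 n) (fun _ u => Q u)
    rw [hA, ← hps, hQsum, Finset.prod_const, one_pow]
  have hsplit : (∑ v ∈ A, if W v then ∏ t : Fin m, Q (v t) else 0)
      + (∑ v ∈ A, if W v then 0 else ∏ t : Fin m, Q (v t)) = 1 := by
    rw [← Finset.sum_add_distrib, ← hμsum]
    refine Finset.sum_congr rfl fun v _ => ?_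
    split_ifs <;> ring
  suffices h2 : (∑ v ∈ A, if W v then 0 else ∏ t : Fin m, Q (v t)) ≤ η by
    calc 1 - η ≤ ∑ v ∈ A, (if W v then ∏ t : Fin m, Q (v t) else 0) := by linarith
      _ = _ := Finset.sum_congr rfl fun v _ => by congr
  have hstep : ∀ v ∈ A, (if W v then 0 else ∏ t : Fin m, Q (v t)) ≤
      ∑ j ∈ (Finset.Icc 1 n).erase i,
        (if (Finset.univ.filter (fun t : Fin m => v t = i)).card ≤
            (Finset.univ.filter (fun t : Fin m => v t = j)).card
         then ∏ t : Fin m, Q (v t) else 0) := by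
    intro v hv
    have hnn : ∀ j ∈ (Finset.Icc 1 n).erase i,
        (0:ℝ) ≤ (if (Finset.univ.filter (fun t : Fin m => v t = i)).card ≤
            (Finset.univ.filter (fun t : Fin m => v t = j)).card
         then ∏ t : Fin m, Q (v t) else 0) := by
      intro j _; split_ifs
      · exact hμnn v hv
      · exact le_rfl
    by_cases hWv : W v
    · rw [if_pos hWv]
      exact Finset.sum_nonneg hnn
    · rw [if_neg hWv]
      simp only [hW] at hWv
      push_neg at hWv
      obtain ⟨j, hjI, hji, hcard⟩ := hWv
      have hjmem : j ∈ (Finset.Icc 1 n).erase i := Finset.mem_erase.mpr ⟨hji, hjI⟩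
      have := Finset.single_le_sum hnn hjmem
      rwa [if_pos hcard] at this
  calc (∑ v ∈ A, if W v then 0 else ∏ t : Fin m, Q (v t))
      ≤ ∑ v ∈ A, ∑ j ∈ (Finset.Icc 1 n).erase i,
        (if (Finset.univ.filter (fun t : Fin m => v t = i)).card ≤
            (Finset.univ.filter (fun t : Fin m => v t = j)).card
         then ∏ t : Fin m, Q (v t) else 0) := Finset.sum_le_sum hstep
    _ = ∑ j ∈ (Finset.Icc 1 n).erase i, ∑ v ∈ A,
        (if (Finset.univ.filter (fun t : Fin m => v t = i)).card ≤
            (Finset.univ.filter (fun t : Fin m => v t = j)).card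
         then ∏ t : Fin m, Q (v t) else 0) := Finset.sum_comm
    _ ≤ ∑ j ∈ (Finset.Icc 1 n).erase i, Real.exp (-(m * (γ ^ 2 * n / 8))) := by
        refine Finset.sum_le_sum fun j hj => ?_
        obtain ⟨hji, hjI⟩ := Finset.mem_erase.mp hj
        exact chernoff n m i j hi hjI hji Q hQnn hQle hQsum γ hγ (hmargin j hjI hji)
    _ = ((Finset.Icc 1 n).erase i).card * Real.exp (-(m * (γ ^ 2 * n / 8))) := by
        rw [Finset.sum_const, nsmul_eq_mul]
    _ ≤ (n : ℝ) * Real.exp (-(m * (γ ^ 2 * n / 8))) := by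
        refine mul_le_mul_of_nonneg_right ?_ (Real.exp_nonneg _)
        have h1 : ((Finset.Icc 1 n).erase i).card ≤ (Finset.Icc 1 n).card :=
          Finset.card_le_card (Finset.erase_subset _ _)
        have h2 : (Finset.Icc 1 n).card = n := by rw [Nat.card_Icc]; omega
        exact_mod_cast h1.trans_eq h2
    _ ≤ η := hbound

lemma gammaD (e x : ℝ) (hx : x ≠ 0) : (e / (8 * x ^ 2)) ^ 2 * x / 8 = e ^ 2 / (512 * x ^ 3) := by
  field_simp
  ring

lemma BdD (c t x e L : ℝ) (hx : x ≠ 0) (he : e ≠ 0) :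
    7 * 10 ^ 12 * c ^ 2 * t ^ 2 * x ^ 3 / e ^ 2 * L * (e ^ 2 / (512 * x ^ 3))
      = 7 * 10 ^ 12 / 512 * (c ^ 2 * t ^ 2) * L := by
  field_simp

open Classical in
theorem stmt_5
    (n C : ℕ) (hn : 2 ≤ n) (hC : 2 ≤ C)
    (P : ℕ → ℕ → ℝ)
    (hPnn : ∀ i ∈ Finset.Icc 1 n, ∀ c ∈ Finset.Icc 1 C, 0 ≤ P i c)
    (hPsum : ∀ i ∈ Finset.Icc 1 n, ∑ c ∈ Finset.Icc 1 C, P i c = 1)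
    (hdistinct : ∀ i ∈ Finset.Icc 1 n, ∀ j ∈ Finset.Icc 1 n, i ≠ j →
        ∃ c ∈ Finset.Icc 1 C, P i c ≠ P j c)
    (ε : ℝ) (hεpos : 0 < ε)
    (hε : IsLeast {x : ℝ | ∃ i ∈ Finset.Icc 1 n, ∃ j ∈ Finset.Icc 1 n, i ≠ j ∧
            x = ∑ c ∈ Finset.Icc 1 C, |P i c - P j c|} ε)
    (T : ℕ) (hT : T = ⌈Real.log C / Real.log 3⌉₊ + 1)
    (η : ℝ) (hη0 : 0 < η) (hη1 : η < 1) :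
    ∃ (m : ℕ) (σ : ℕ → ℕ → ℝ),
      (m : ℤ) ≤ ⌈7 * 10 ^ 12 * (C : ℝ) ^ 2 * (T : ℝ) ^ 2 * (n : ℝ) ^ 3 / ε ^ 2 *
          Real.log (n / η)⌉ ∧
      (∀ c ∈ Finset.Icc 1 C, (∀ j ∈ Finset.Icc 1 n, 0 ≤ σ c j) ∧
          ∑ j ∈ Finset.Icc 1 n, σ c j = 1) ∧
      ∀ i ∈ Finset.Icc 1 n,
        1 - η ≤ ∑ v ∈ Fintype.piFinset (fun _ : Fin m => Finset.Icc 1 n),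
          (if ∀ j ∈ Finset.Icc 1 n, j ≠ i →
                (Finset.univ.filter (fun t : Fin m => v t = j)).card <
                (Finset.univ.filter (fun t : Fin m => v t = i)).card
           then ∏ t : Fin m, (∑ c ∈ Finset.Icc 1 C, P i c * σ c (v t)) else 0) := by
  have hn0 : (0:ℝ) < n := nign_pos n hn
  have hn2 : (2:ℝ) ≤ n := by exact_mod_cast hn
  have hC1 : (1:ℝ) ≤ C := by
    have : (2:ℝ) ≤ C := by exact_mod_cast hC
    linarith
  have hT1 : (1:ℝ) ≤ T := by
    have : 1 ≤ T := by rw [hT]; omega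
    exact_mod_cast this
  have hnη : (1:ℝ) < n / η := by
    rw [lt_div_iff₀ hη0]
    nlinarith
  have hL : 0 < Real.log ((n:ℝ) / η) := Real.log_pos hnη
  set L : ℝ := Real.log ((n:ℝ) / η) with hLdef
  set Bd : ℝ := 7 * 10 ^ 12 * (C : ℝ) ^ 2 * (T : ℝ) ^ 2 * (n : ℝ) ^ 3 / ε ^ 2 * L with hBddef
  have hBdpos : 0 < Bd := by
    have hC0 : (0:ℝ) < C := by linarith
    have hT0 : (0:ℝ) < T := by linarith
    have h1 : (0:ℝ) < 7 * 10 ^ 12 * (C : ℝ) ^ 2 * (T : ℝ) ^ 2 * (n : ℝ) ^ 3 :=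
      mul_pos (mul_pos (mul_pos (show (0:ℝ) < 7 * 10 ^ 12 by norm_num)
        (pow_pos hC0 2)) (pow_pos hT0 2)) (pow_pos hn0 3)
    exact mul_pos (div_pos h1 (by positivity)) hL
  set m : ℕ := (⌈Bd⌉).toNat with hmdef
  have hmceil : (m : ℤ) ≤ ⌈Bd⌉ := by
    rw [hmdef, Int.toNat_of_nonneg (Int.ceil_nonneg hBdpos.le)]
  have hmge : Bd ≤ (m : ℝ) := by
    have h1 : ((⌈Bd⌉ : ℤ) : ℝ) ≤ ((m : ℤ) : ℝ) := by
      exact_mod_cast le_of_eq (Int.toNat_of_nonneg (Int.ceil_nonneg hBdpos.le)).symm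
    calc Bd ≤ ((⌈Bd⌉ : ℤ) : ℝ) := Int.le_ceil Bd
      _ ≤ ((m : ℤ) : ℝ) := h1
      _ = (m : ℝ) := by push_cast; rfl
  refine ⟨m, bSig n C P, hmceil, ?_, ?_⟩
  · intro c _
    exact ⟨fun j hj => sig_nonneg n C P hn hPnn hPsum c j hj, sig_sum n C P hn c⟩
  · intro i hi
    set γ : ℝ := ε / (8 * (n:ℝ) ^ 2) with hγdef
    have hγ : 0 < γ := by positivity
    have hεlb : ∀ i' ∈ Finset.Icc 1 n, ∀ j ∈ Finset.Icc 1 n, i' ≠ j →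
        ε ≤ ∑ c ∈ Finset.Icc 1 C, |P i' c - P j c| := by
      intro i' hi' j hj hij
      exact hε.2 ⟨i', hi', j, hj, hij, rfl⟩
    have hbound : (n : ℝ) * Real.exp (-(m * (γ ^ 2 * n / 8))) ≤ η := by
      have hD : γ ^ 2 * n / 8 = ε ^ 2 / (512 * (n:ℝ) ^ 3) := by
        rw [hγdef]; exact gammaD ε n hn0.ne'
      have hBD : Bd * (γ ^ 2 * n / 8) = 7 * 10 ^ 12 / 512 * ((C:ℝ) ^ 2 * (T:ℝ) ^ 2) * L := by
        rw [hD, hBddef]; exact BdD _ _ _ _ _ hn0.ne' hεpos.ne'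
      have hLBD : L ≤ Bd * (γ ^ 2 * n / 8) := by
        rw [hBD]
        have hC2 : (1:ℝ) ≤ (C:ℝ) ^ 2 := by nlinarith
        have hT2 : (1:ℝ) ≤ (T:ℝ) ^ 2 := by nlinarith
        have hK : (1:ℝ) ≤ 7 * 10 ^ 12 / 512 * ((C:ℝ) ^ 2 * (T:ℝ) ^ 2) := by nlinarith
        calc L = 1 * L := (one_mul L).symm
          _ ≤ 7 * 10 ^ 12 / 512 * ((C:ℝ) ^ 2 * (T:ℝ) ^ 2) * L :=
              mul_le_mul_of_nonneg_right hK hL.le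
      have hmD : L ≤ (m:ℝ) * (γ ^ 2 * n / 8) := by
        calc L ≤ Bd * (γ ^ 2 * n / 8) := hLBD
          _ ≤ (m:ℝ) * (γ ^ 2 * n / 8) := by
              refine mul_le_mul_of_nonneg_right hmge (by positivity)
      have hexp : Real.exp (-((m:ℝ) * (γ ^ 2 * n / 8))) ≤ η / n := by
        have h1 : Real.exp (-((m:ℝ) * (γ ^ 2 * n / 8))) ≤ Real.exp (-L) :=
          Real.exp_le_exp.mpr (by linarith)
        have h2 : Real.exp (-L) = η / n := by
          rw [hLdef, Real.exp_neg, Real.exp_log (by positivity), inv_div]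
        linarith [h1, h2.le, h2.ge]
      calc (n : ℝ) * Real.exp (-(m * (γ ^ 2 * n / 8)))
          ≤ (n : ℝ) * (η / n) := mul_le_mul_of_nonneg_left hexp hn0.le
        _ = η := by field_simp
    exact election n m i hi (fun u => ∑ c ∈ Finset.Icc 1 C, P i c * bSig n C P c u)
      (fun u hu => Finset.sum_nonneg fun c hc =>
        mul_nonneg (hPnn i hi c hc) (sig_nonneg n C P hn hPnn hPsum c u hu))
      (fun u hu => by
        calc ∑ c ∈ Finset.Icc 1 C, P i c * bSig n C P c u
            ≤ ∑ c ∈ Finset.Icc 1 C, P i c * (2 / n) := by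
              refine Finset.sum_le_sum fun c hc => ?_
              exact mul_le_mul_of_nonneg_left (sig_le n C P hn hPnn hPsum c u hu)
                (hPnn i hi c hc)
          _ = 2 / n := by rw [← Finset.sum_mul, hPsum i hi, one_mul])
      (by
        rw [Finset.sum_comm]
        calc ∑ c ∈ Finset.Icc 1 C, ∑ u ∈ Finset.Icc 1 n, P i c * bSig n C P c u
            = ∑ c ∈ Finset.Icc 1 C, P i c * 1 := by
              refine Finset.sum_congr rfl fun c _ => ?_
              rw [← Finset.mul_sum, sig_sum n C P hn c]
          _ = 1 := by simp only [mul_one]; exact hPsum i hi)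
      γ hγ
      (fun j hj hji => margin n C P hn hPnn hPsum ε hεlb i hi j hj hji)
      η hbound
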